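/- If a word w over {O,U} of even length satisfies Φ(w) = 0 and contains at least two O's and at least two U's, then w can be transformed by a sequence of reductions (each deleting two adjacent equal letters) into a word of length 4, and moreover one can choose disjoint occurrences of 'OU' and 'UO' in w (as a cyclic word) whose letters all survive such a sequence of reductions. -/

import Mathlib

inductive Letter : Type
  | O : Letter
  | U : Letter
  deriving DecidableEq, BEq, Repr

open Letter

/-- number of O's in a word -/
def countO (w : List Letter) : ℕ := w.count O

/-- number of U's in a word -/
def countU (w : List Letter) : ℕ := w.count U

/-- number of O's in odd 1-based positions (even 0-based index) -/
def NOo (w : List Letter) : ℕ := ((w.zipIdx.map Prod.swap).filter (fun p => p.1 % 2 == 0 && p.2 == O)).length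

/-- number of O's in even 1-based positions -/
def NOe (w : List Letter) : ℕ := ((w.zipIdx.map Prod.swap).filter (fun p => p.1 % 2 == 1 && p.2 == O)).length

/-- number of U's in odd 1-based positions -/
def NUo (w : List Letter) : ℕ := ((w.zipIdx.map Prod.swap).filter (fun p => p.1 % 2 == 0 && p.2 == U)).length

/-- number of U's in even 1-based positions -/
def NUe (w : List Letter) : ℕ := ((w.zipIdx.map Prod.swap).filter (fun p => p.1 % 2 == 1 && p.2 == U)).length

/-- twice the OU signed quantity: N^O_e + N^U_o − N^O_o − N^U_e -/
def twoPhi (w : List Letter) : ℤ := (NOe w : ℤ) + NUo w - NOo w - NUe w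

/-- the (signed) OU number Φ of a word of even length -/
def Phi (w : List Letter) : ℤ := twoPhi w / 2

/-- cyclic access to the letters of a word -/
def cget (w : List Letter) (i : ℕ) : Letter := w.getD (i % w.length) O

/-- a cyclic occurrence of the factor `OU` at position `i` -/
def OUat (w : List Letter) (i : ℕ) : Prop := cget w i = O ∧ cget w (i + 1) = U

/-- a cyclic occurrence of the factor `UO` at position `i` -/
def UOat (w : List Letter) (i : ℕ) : Prop := cget w i = U ∧ cget w (i + 1) = O

instance (w : List Letter) (i : ℕ) : Decidable (OUat w i) := by unfold OUat; infer_instance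
instance (w : List Letter) (i : ℕ) : Decidable (UOat w i) := by unfold UOat; infer_instance

/-- the cyclic factors at positions `i` and `j` (each occupying `{i, i+1 mod n}`) are disjoint -/
def PairDisjoint (n i j : ℕ) : Prop :=
  i ≠ j ∧ i ≠ (j + 1) % n ∧ (i + 1) % n ≠ j ∧ (i + 1) % n ≠ (j + 1) % n

/-- a word is alternating in the cyclic sense -/
def CyclicAlternating (w : List Letter) : Prop :=
  w.Chain' (· ≠ ·) ∧ ∀ a ∈ w.head?, ∀ b ∈ w.getLast?, a ≠ b

/-- one reduction: delete two adjacent equal letters -/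
def Reduces (w w' : List Letter) : Prop :=
  ∃ a b x, w = a ++ x :: x :: b ∧ w' = a ++ b

/-- `ReducesN k w w'` : `w'` is obtained from `w` by exactly `k` reductions -/
inductive ReducesN : ℕ → List Letter → List Letter → Prop
  | refl (w : List Letter) : ReducesN 0 w w
  | step {k : ℕ} {w w' w'' : List Letter} :
      Reduces w w' → ReducesN k w' w'' → ReducesN (k + 1) w w''

instance : LawfulBEq Letter where
  eq_of_beq := by intro a b h; cases a <;> cases b <;> first | rfl | exact absurd h (by decide)
  rfl := by intro a; cases a <;> rfl


-- ===== cons lemmas =====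

theorem zs_cons (x : Letter) (w : List Letter) :
    (x :: w).zipIdx.map Prod.swap = (0, x) :: (w.zipIdx.map Prod.swap).map (Prod.map (· + 1) id) := by
  rw [List.zipIdx_cons, List.zipIdx_succ]
  simp [List.map_map, Function.comp_def]

theorem filt_shift (x : Letter) (w : List Letter) :
    List.filter ((fun p : ℕ × Letter => p.1 % 2 == 0 && p.2 == x) ∘ Prod.map (· + 1) id) (w.zipIdx.map Prod.swap)
      = List.filter (fun p : ℕ × Letter => p.1 % 2 == 1 && p.2 == x) (w.zipIdx.map Prod.swap) := by
  apply List.filter_congr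
  rintro ⟨a, b⟩ _
  rcases Nat.mod_two_eq_zero_or_one a with h | h <;> simp [Prod.map, Nat.add_mod, h]

theorem filt_shift' (x : Letter) (w : List Letter) :
    List.filter ((fun p : ℕ × Letter => p.1 % 2 == 1 && p.2 == x) ∘ Prod.map (· + 1) id) (w.zipIdx.map Prod.swap)
      = List.filter (fun p : ℕ × Letter => p.1 % 2 == 0 && p.2 == x) (w.zipIdx.map Prod.swap) := by
  apply List.filter_congr
  rintro ⟨a, b⟩ _
  rcases Nat.mod_two_eq_zero_or_one a with h | h <;> simp [Prod.map, Nat.add_mod, h]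

theorem NOo_cons (x : Letter) (w : List Letter) : NOo (x :: w) = (if x = O then 1 else 0) + NOe w := by
  unfold NOo NOe
  rw [zs_cons, List.filter_cons, List.filter_map, filt_shift]
  cases x
  · rw [if_pos (by decide)]; simp [List.length_map, Nat.add_comm]
  · rw [if_neg (by decide)]; simp [List.length_map]

theorem NUo_cons (x : Letter) (w : List Letter) : NUo (x :: w) = (if x = U then 1 else 0) + NUe w := by
  unfold NUo NUe
  rw [zs_cons, List.filter_cons, List.filter_map, filt_shift]
  cases x
  · rw [if_neg (by decide)]; simp [List.length_map]
  · rw [if_pos (by decide)]; simp [List.length_map, Nat.add_comm]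

theorem NOe_cons (x : Letter) (w : List Letter) : NOe (x :: w) = NOo w := by
  unfold NOe NOo
  rw [zs_cons, List.filter_cons, List.filter_map, filt_shift']
  rw [if_neg (by cases x <;> decide)]; simp [List.length_map]

theorem NUe_cons (x : Letter) (w : List Letter) : NUe (x :: w) = NUo w := by
  unfold NUe NUo
  rw [zs_cons, List.filter_cons, List.filter_map, filt_shift']
  rw [if_neg (by cases x <;> decide)]; simp [List.length_map]

theorem twoPhi_cons (x : Letter) (w : List Letter) :
    twoPhi (x :: w) = (if x = O then -1 else 1) - twoPhi w := by
  unfold twoPhi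
  rw [NOo_cons, NOe_cons, NUo_cons, NUe_cons]
  cases x <;> simp <;> ring

@[simp] theorem NOo_nil : NOo [] = 0 := by simp [NOo]
@[simp] theorem NOe_nil : NOe [] = 0 := by simp [NOe]
@[simp] theorem NUo_nil : NUo [] = 0 := by simp [NUo]
@[simp] theorem NUe_nil : NUe [] = 0 := by simp [NUe]
@[simp] theorem twoPhi_nil : twoPhi [] = 0 := by simp [twoPhi]

-- ===== identities =====

theorem NN_ident (w : List Letter) :
    NOo w + NOe w = countO w ∧ NUo w + NUe w = countU w ∧
    NOo w + NUo w = (w.length + 1) / 2 ∧ NOe w + NUe w = w.length / 2 := by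
  induction w with
  | nil => simp [countO, countU]
  | cons x t ih =>
    obtain ⟨h1, h2, h3, h4⟩ := ih
    rw [NOo_cons, NOe_cons, NUo_cons, NUe_cons]
    simp only [countO, countU, List.count_cons, List.length_cons] at *
    cases x <;> simp <;> omega

theorem countO_even (w : List Letter) (hl : Even w.length) (h : twoPhi w = 0) :
    countO w % 2 = 0 ∧ countU w % 2 = 0 := by
  obtain ⟨h1, h2, h3, h4⟩ := NN_ident w
  rw [Nat.even_iff] at hl
  unfold twoPhi at h
  omega

theorem count_sum (w : List Letter) : countO w + countU w = w.length := by
  induction w with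
  | nil => rfl
  | cons x t ih =>
    simp only [countO, countU, List.count_cons, List.length_cons] at *
    cases x <;> simp <;> omega

theorem twoPhi_even (w : List Letter) (hl : Even w.length) : twoPhi w % 2 = 0 := by
  obtain ⟨h1, h2, h3, h4⟩ := NN_ident w
  rw [Nat.even_iff] at hl
  unfold twoPhi
  omega

theorem twoPhi_of_Phi (w : List Letter) (hl : Even w.length) (h : Phi w = 0) : twoPhi w = 0 := by
  have := twoPhi_even w hl
  unfold Phi at h
  omega

-- ===== append / reduction =====

theorem twoPhi_append (a b : List Letter) :
    twoPhi (a ++ b) = twoPhi a + (-1 : ℤ) ^ a.length * twoPhi b := by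
  induction a with
  | nil => simp
  | cons x t ih =>
    rw [List.cons_append, twoPhi_cons, twoPhi_cons, ih]
    simp [pow_succ]
    ring

theorem twoPhi_reduce {w w' : List Letter} (h : Reduces w w') : twoPhi w' = twoPhi w := by
  obtain ⟨a, b, x, rfl, rfl⟩ := h
  rw [twoPhi_append, twoPhi_append, twoPhi_cons, twoPhi_cons]
  ring

theorem length_reduce {w w' : List Letter} (h : Reduces w w') : w.length = w'.length + 2 := by
  obtain ⟨a, b, x, rfl, rfl⟩ := h
  simp
  omega

theorem count_reduce {w w' : List Letter} (h : Reduces w w') (y : Letter) :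
    w.count y = w'.count y ∨ w.count y = w'.count y + 2 := by
  obtain ⟨a, b, x, rfl, rfl⟩ := h
  simp [List.count_append, List.count_cons]
  by_cases hxy : x = y <;> simp [hxy] <;> omega

-- ===== alternating =====

theorem twoPhi_chain (w : List Letter) (h : w.Chain' (· ≠ ·)) :
    twoPhi w = (if w.head? = some O then -1 else 1) * w.length := by
  induction w with
  | nil => simp
  | cons x t ih =>
    have ht : t.Chain' (· ≠ ·) := h.tail
    have ih' := ih ht
    rw [twoPhi_cons, ih']
    cases t with
    | nil => cases x <;> simp
    | cons y s =>
      have hxy : x ≠ y := List.isChain_cons_cons.mp h |>.1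
      cases x <;> cases y <;> simp_all <;> push_cast <;> ring

-- not chain' gives a split
theorem split_of_not_chain (w : List Letter) (h : ¬ w.Chain' (· ≠ ·)) :
    ∃ a x b, w = a ++ x :: x :: b := by
  induction w with
  | nil => exact absurd List.isChain_nil h
  | cons x t ih =>
    cases t with
    | nil => exact absurd (List.isChain_singleton x) h
    | cons y s =>
      by_cases hxy : x = y
      · exact ⟨[], x, s, by rw [hxy]; rfl⟩
      · have : ¬ (y :: s).Chain' (· ≠ ·) := fun hc => h (List.isChain_cons_cons.mpr ⟨hxy, hc⟩)
        obtain ⟨a, z, b, hab⟩ := ih this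
        exact ⟨x :: a, z, b, by rw [hab]; rfl⟩

-- no adjacent equal pair of letter x bounds its count
theorem nopair_count (x y : Letter) (hxy : x ≠ y) :
    ∀ w : List Letter, (∀ a b, w ≠ a ++ x :: x :: b) →
      w.count x ≤ w.count y + 1 ∧ (w.head? = some y → w.count x ≤ w.count y) := by
  intro w
  induction w with
  | nil => simp
  | cons z t ih =>
    intro hno
    have hnt : ∀ a b, t ≠ a ++ x :: x :: b := by
      intro a b hab
      exact hno (z :: a) b (by rw [hab]; rfl)
    have IH := ih hnt
    by_cases hzy : z = y
    · subst hzy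
      constructor
      · simp [List.count_cons, hxy, Ne.symm hxy]
        omega
      · intro _
        simp [List.count_cons, hxy, Ne.symm hxy]
        omega
    · have hzx : z = x := by cases z <;> cases x <;> cases y <;> simp_all
      subst hzx
      have hhead : t.head? ≠ some z := by
        intro hh
        cases t with
        | nil => simp at hh
        | cons z' s =>
          simp at hh
          exact hno [] s (by rw [hh]; rfl)
      constructor
      · cases t with
        | nil => simp [List.count_cons]
        | cons z' s =>
          have hz'y : z' = y := by
            have : z' ≠ z := fun h => hhead (by simp [h])
            cases z' <;> cases z <;> cases y <;> simp_all
          subst hz'y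
          have := IH.2 (by simp)
          simp [List.count_cons, hxy, Ne.symm hxy] at this ⊢
          omega
      · intro hh
        simp at hh
        exact absurd hh hzy

-- ===== good step =====

theorem counts_split (a b : List Letter) (x : Letter) :
    countO (a ++ x :: x :: b) = countO (a ++ b) + (if x = O then 2 else 0) ∧
    countU (a ++ x :: x :: b) = countU (a ++ b) + (if x = U then 2 else 0) := by
  simp [countO, countU, List.count_append, List.count_cons]
  cases x <;> simp <;> omega

theorem not_chain (w : List Letter) (h6 : 1 ≤ w.length) (ht : twoPhi w = 0) :
    ¬ w.Chain' (· ≠ ·) := by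
  intro hc
  have h := twoPhi_chain w hc
  rw [ht] at h
  split_ifs at h <;> omega

theorem good_step (w : List Letter) (h6 : 6 ≤ w.length) (hl : Even w.length) (ht : twoPhi w = 0)
    (hO : 2 ≤ countO w) (hU : 2 ≤ countU w) :
    ∃ w₁, Reduces w w₁ ∧ 2 ≤ countO w₁ ∧ 2 ≤ countU w₁ := by
  have hsum := count_sum w
  have ⟨hOe, hUe⟩ := countO_even w hl ht
  by_cases hO2 : countO w = 2
  · have hpair : ∃ a b, w = a ++ U :: U :: b := by
      by_contra hno
      push_neg at hno
      have h := (nopair_count U O (by decide) w hno).1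
      unfold countO countU at *
      omega
    obtain ⟨a, b, hab⟩ := hpair
    have hcs := counts_split a b U
    rw [← hab] at hcs
    refine ⟨a ++ b, ⟨a, b, U, hab, rfl⟩, ?_, ?_⟩ <;> · simp at hcs; omega
  · by_cases hU2 : countU w = 2
    · have hpair : ∃ a b, w = a ++ O :: O :: b := by
        by_contra hno
        push_neg at hno
        have h := (nopair_count O U (by decide) w hno).1
        unfold countO countU at *
        omega
      obtain ⟨a, b, hab⟩ := hpair
      have hcs := counts_split a b O
      rw [← hab] at hcs
      refine ⟨a ++ b, ⟨a, b, O, hab, rfl⟩, ?_, ?_⟩ <;> · simp at hcs; omega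
    · obtain ⟨a, x, b, hab⟩ := split_of_not_chain w (not_chain w (by omega) ht)
      have hcs := counts_split a b x
      rw [← hab] at hcs
      refine ⟨a ++ b, ⟨a, b, x, hab, rfl⟩, ?_, ?_⟩ <;> cases x <;> simp at hcs <;> omega

-- ===== reduce to length 4 =====

theorem reduce_to_four : ∀ (n : ℕ) (w : List Letter), w.length = n → Even w.length →
    twoPhi w = 0 → 2 ≤ countO w → 2 ≤ countU w →
    ∃ w', Relation.ReflTransGen Reduces w w' ∧ w'.length = 4 ∧ countO w' = 2 ∧ countU w' = 2 ∧
      twoPhi w' = 0 := by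
  intro n
  induction n using Nat.strong_induction_on with
  | _ n ih =>
    intro w hn hl ht hO hU
    have hsum := count_sum w
    by_cases h4 : w.length = 4
    · exact ⟨w, .refl, h4, by omega, by omega, ht⟩
    · have h6 : 6 ≤ w.length := by
        rw [Nat.even_iff] at hl; omega
      obtain ⟨w₁, hr, hO1, hU1⟩ := good_step w h6 hl ht hO hU
      have hlen := length_reduce hr
      have hl1 : Even w₁.length := by rw [Nat.even_iff] at *; omega
      have ht1 : twoPhi w₁ = 0 := (twoPhi_reduce hr).trans ht
      obtain ⟨w', h1, h2, h3, h4', h5⟩ :=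
        ih w₁.length (by omega) w₁ rfl hl1 ht1 hO1 hU1
      exact ⟨w', .head hr h1, h2, h3, h4', h5⟩

-- ===== cyclic machinery =====

theorem cyc_shift (n s m : ℕ) (h : m < n) : ∃ k, (s + k) % n = m := by
  refine ⟨m + n - s % n, ?_⟩
  have h1 : n * (s / n) + s % n = s := Nat.div_add_mod s n
  have h2 : s % n < n := Nat.mod_lt _ (by omega)
  have h3 : s + (m + n - s % n) = n * (s / n) + (m + n) := by omega
  rw [h3, Nat.mul_add_mod, Nat.add_mod_right, Nat.mod_eq_of_lt h]

theorem cget_congr {w : List Letter} {a b : ℕ} (h : a % w.length = b % w.length) :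
    cget w a = cget w b := by unfold cget; rw [h]

theorem mod_succ_cancel {n a b : ℕ} (h : (a + 1) % n = (b + 1) % n) : a % n = b % n :=
  Nat.ModEq.add_right_cancel' 1 h

theorem letter_ne_U {l : Letter} (h : l ≠ U) : l = O := by cases l <;> simp_all
theorem letter_ne_O {l : Letter} (h : l ≠ O) : l = U := by cases l <;> simp_all

theorem exists_pos_of_count (x : Letter) (w : List Letter) (h : 1 ≤ w.count x) :
    ∃ m, m < w.length ∧ w.getD m O = x := by
  have hmem : x ∈ w := by
    rw [← List.count_pos_iff]; omega
  obtain ⟨m, hm, he⟩ := List.mem_iff_getElem.mp hmem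
  exact ⟨m, hm, by rw [List.getD_eq_getElem _ _ hm]; exact he⟩

theorem two_pos_of_count (x : Letter) (w : List Letter) (h : 2 ≤ w.count x) :
    ∃ m1 m2, m1 < m2 ∧ m2 < w.length ∧ w.getD m1 O = x ∧ w.getD m2 O = x := by
  induction w with
  | nil => simp at h
  | cons z t ih =>
    by_cases hz : z = x
    · have h1 : 1 ≤ t.count x := by
        rw [hz, List.count_cons_self] at h; omega
      obtain ⟨m, hm, he⟩ := exists_pos_of_count x t h1
      exact ⟨0, m + 1, by omega, by simp only [List.length_cons]; omega, by simp [hz], by simpa using he⟩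
    · have h2 : 2 ≤ t.count x := by
        rwa [List.count_cons_of_ne hz] at h
      obtain ⟨m1, m2, hlt, hm2, he1, he2⟩ := ih h2
      exact ⟨m1 + 1, m2 + 1, by omega, by simp only [List.length_cons]; omega, by simpa using he1, by simpa using he2⟩

theorem split_cget (a b : List Letter) (x : Letter) (w : List Letter) (hab : w = a ++ x :: x :: b) :
    cget w a.length = x ∧ cget w (a.length + 1) = x := by
  subst hab
  have hl1 : a.length < (a ++ x :: x :: b).length := by simp
  have hl2 : a.length + 1 < (a ++ x :: x :: b).length := by simp
  constructor
  · unfold cget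
    rw [Nat.mod_eq_of_lt hl1, List.getD_eq_getElem _ _ hl1,
      List.getElem_append_right (Nat.le_refl a.length)]
    simp
  · unfold cget
    rw [Nat.mod_eq_of_lt hl2, List.getD_eq_getElem _ _ hl2,
      List.getElem_append_right (by omega)]
    simp [Nat.add_sub_cancel_left]

theorem core (w : List Letter) (hn4 : 4 ≤ w.length) (hU2 : 2 ≤ countU w)
    (p : ℕ) (hp : cget w p = O) (hp1 : cget w (p + 1) = O) :
    ∃ i j, i < w.length ∧ j < w.length ∧ PairDisjoint w.length i j ∧ OUat w i ∧ UOat w j := by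
  classical
  have hn0 : 0 < w.length := by omega
  -- least k with cget w (p+1+k) = U
  have hUex : ∃ k, cget w (p + 1 + k) = U := by
    obtain ⟨mU, hmU, hmUx⟩ := exists_pos_of_count U w (by unfold countU at hU2; omega)
    obtain ⟨k, hk⟩ := cyc_shift w.length (p + 1) mU hmU
    refine ⟨k, ?_⟩
    unfold cget
    rw [hk]
    exact hmUx
  set k₀ := Nat.find hUex with hk₀def
  have hk₀U : cget w (p + 1 + k₀) = U := Nat.find_spec hUex
  have hk₀min : ∀ t, t < k₀ → cget w (p + 1 + t) ≠ U := fun t ht => Nat.find_min hUex ht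
  have hk₀pos : 1 ≤ k₀ := by
    by_contra h0
    have h0' : k₀ = 0 := by omega
    rw [h0'] at hk₀U
    rw [show p + 1 + 0 = p + 1 by omega] at hk₀U
    rw [hp1] at hk₀U
    exact absurd hk₀U (by decide)
  set i := p + k₀ with hidef
  have hiO : cget w i = O := by
    have h := hk₀min (k₀ - 1) (by omega)
    rw [show p + 1 + (k₀ - 1) = i by omega] at h
    exact letter_ne_U h
  have hi1U : cget w (i + 1) = U := by
    rw [show i + 1 = p + 1 + k₀ by omega]
    exact hk₀U
  have him1 : cget w (p + (k₀ - 1)) = O := by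
    by_cases h1 : k₀ = 1
    · rw [show p + (k₀ - 1) = p by omega]
      exact hp
    · have h := hk₀min (k₀ - 2) (by omega)
      rw [show p + 1 + (k₀ - 2) = p + (k₀ - 1) by omega] at h
      exact letter_ne_U h
  -- choose a U-position r with r % n ≠ (i+1) % n
  obtain ⟨r1, r2, hr12, hr2n, hr1U, hr2U⟩ := two_pos_of_count U w (by unfold countU at hU2; omega)
  have hr1n : r1 < w.length := by omega
  set r := if r1 = (i + 1) % w.length then r2 else r1 with hrdef
  have hrn : r < w.length := by
    rw [hrdef]; split <;> omega
  have hrU : cget w r = U := by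
    unfold cget
    rw [Nat.mod_eq_of_lt hrn, hrdef]
    split
    · exact hr2U
    · exact hr1U
  have hrne : r % w.length ≠ (i + 1) % w.length := by
    rw [Nat.mod_eq_of_lt hrn, hrdef]
    split
    · rename_i hcase
      intro hcon
      rw [← hcon] at hcase
      omega
    · rename_i hcase
      exact hcase
  -- least k with cget w (r+k) = O
  have hOex : ∃ k, cget w (r + k) = O := by
    obtain ⟨k, hk⟩ := cyc_shift w.length r (i % w.length) (Nat.mod_lt _ hn0)
    refine ⟨k, ?_⟩
    have : cget w (r + k) = cget w i := cget_congr hk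
    rw [this]
    exact hiO
  set k₂ := Nat.find hOex with hk₂def
  have hk₂O : cget w (r + k₂) = O := Nat.find_spec hOex
  have hk₂min : ∀ t, t < k₂ → cget w (r + t) ≠ O := fun t ht => Nat.find_min hOex ht
  have hk₂pos : 1 ≤ k₂ := by
    by_contra h0
    have h0' : k₂ = 0 := by omega
    rw [h0', show r + 0 = r by omega, hrU] at hk₂O
    exact absurd hk₂O (by decide)
  set j := r + (k₂ - 1) with hjdef
  have hjU : cget w j = U := by
    have h := hk₂min (k₂ - 1) (by omega)
    exact letter_ne_O h
  have hj1O : cget w (j + 1) = O := by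
    rw [show j + 1 = r + k₂ by omega]
    exact hk₂O
  -- assemble
  have key1 : i % w.length ≠ j % w.length := by
    intro h
    have h2 := cget_congr (w := w) h
    rw [hiO, hjU] at h2
    exact absurd h2 (by decide)
  refine ⟨i % w.length, j % w.length, Nat.mod_lt _ hn0, Nat.mod_lt _ hn0,
    ⟨key1, ?_, ?_, ?_⟩, ⟨?_, ?_⟩, ⟨?_, ?_⟩⟩
  · -- i % n ≠ (j % n + 1) % n
    intro h
    rw [Nat.mod_add_mod] at h
    rw [show i = p + (k₀ - 1) + 1 by omega] at h
    have h2 := mod_succ_cancel h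
    have h3 := cget_congr (w := w) h2
    rw [him1, hjU] at h3
    exact absurd h3 (by decide)
  · -- (i % n + 1) % n ≠ j % n
    intro h
    rw [Nat.mod_add_mod] at h
    by_cases hc : k₂ = 1
    · exact hrne (by rw [show r = j by omega]; exact h.symm)
    · have h2 : j = (r + (k₂ - 2)) + 1 := by omega
      rw [h2] at h
      have h3 := mod_succ_cancel h
      have h4 := cget_congr (w := w) h3
      rw [hiO] at h4
      exact hk₂min (k₂ - 2) (by omega) h4.symm
  · -- (i % n + 1) % n ≠ (j % n + 1) % n
    intro h
    rw [Nat.mod_add_mod, Nat.mod_add_mod] at h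
    exact key1 (mod_succ_cancel h)
  · have h : cget w (i % w.length) = cget w i := cget_congr (Nat.mod_mod_of_dvd _ dvd_rfl)
    rw [h, hiO]
  · have h : cget w (i % w.length + 1) = cget w (i + 1) := cget_congr (by rw [Nat.mod_add_mod])
    rw [h, hi1U]
  · have h : cget w (j % w.length) = cget w j := cget_congr (Nat.mod_mod_of_dvd _ dvd_rfl)
    rw [h, hjU]
  · have h : cget w (j % w.length + 1) = cget w (j + 1) := cget_congr (by rw [Nat.mod_add_mod])
    rw [h, hj1O]

-- ===== swap symmetry =====

def swapL : Letter → Letter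
  | O => U
  | U => O

theorem swapL_eq_U {l : Letter} (h : swapL l = U) : l = O := by cases l <;> simp_all [swapL]
theorem swapL_eq_O {l : Letter} (h : swapL l = O) : l = U := by cases l <;> simp_all [swapL]

theorem swap_cget (w : List Letter) (hn : 0 < w.length) (k : ℕ) :
    cget (w.map swapL) k = swapL (cget w k) := by
  unfold cget
  rw [List.length_map]
  rw [List.getD_eq_getElem _ _ (by rw [List.length_map]; exact Nat.mod_lt _ hn),
    List.getD_eq_getElem _ _ (Nat.mod_lt _ hn)]
  simp

theorem swap_countU (w : List Letter) : countU (w.map swapL) = countO w := by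
  induction w with
  | nil => rfl
  | cons x t ih =>
    simp only [countU, countO, List.map_cons, List.count_cons] at *
    cases x <;> simp [swapL] <;> omega

theorem PairDisjoint.symm {n i j : ℕ} (h : PairDisjoint n i j) : PairDisjoint n j i :=
  ⟨h.1.symm, h.2.2.1.symm, h.2.1.symm, h.2.2.2.symm⟩

theorem exists_disjoint (w : List Letter) (hl : Even w.length) (ht : twoPhi w = 0)
    (hO : 2 ≤ countO w) (hU : 2 ≤ countU w) :
    ∃ i j, i < w.length ∧ j < w.length ∧ PairDisjoint w.length i j ∧ OUat w i ∧ UOat w j := by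
  have hsum := count_sum w
  have hn4 : 4 ≤ w.length := by omega
  obtain ⟨a, x, b, hab⟩ := split_of_not_chain w (not_chain w (by omega) ht)
  obtain ⟨hc1, hc2⟩ := split_cget a b x w hab
  cases x with
  | O => exact core w hn4 hU a.length hc1 hc2
  | U =>
    have hn0 : 0 < w.length := by omega
    have hlen2 : (w.map swapL).length = w.length := by simp
    have h1 : cget (w.map swapL) a.length = O := by rw [swap_cget w hn0, hc1]; rfl
    have h2 : cget (w.map swapL) (a.length + 1) = O := by rw [swap_cget w hn0, hc2]; rfl
    have hU2 : 2 ≤ countU (w.map swapL) := by rw [swap_countU]; exact hO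
    obtain ⟨i, j, hi, hj, hd, hOU, hUO⟩ := core (w.map swapL) (by omega) hU2 a.length h1 h2
    rw [hlen2] at hi hj hd
    obtain ⟨hA, hB⟩ := hUO
    obtain ⟨hC, hD⟩ := hOU
    rw [swap_cget w hn0] at hA hB hC hD
    exact ⟨j, i, hj, hi, PairDisjoint.symm hd,
      ⟨swapL_eq_U hA, swapL_eq_O hB⟩, ⟨swapL_eq_O hC, swapL_eq_U hD⟩⟩

-- ===== length-4 endgame =====

instance (n i j : ℕ) : Decidable (PairDisjoint n i j) := by unfold PairDisjoint; infer_instance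

theorem final_four (w' : List Letter) (hl : w'.length = 4) (hO : countO w' = 2)
    (hU : countU w' = 2) (ht : twoPhi w' = 0) :
    ∃ i j, i < 4 ∧ j < 4 ∧ PairDisjoint 4 i j ∧ OUat w' i ∧ UOat w' j := by
  rcases w' with _ | ⟨a, _ | ⟨b, _ | ⟨c, _ | ⟨d, _ | ⟨e, t⟩⟩⟩⟩⟩ <;> simp at hl
  cases a <;> cases b <;> cases c <;> cases d <;>
    first
      | exact absurd hO (by decide)
      | exact absurd hU (by decide)
      | exact absurd ht (by decide)
      | exact ⟨1, 3, by decide, by decide, by decide, by decide, by decide⟩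
      | exact ⟨0, 2, by decide, by decide, by decide, by decide, by decide⟩
      | exact ⟨2, 0, by decide, by decide, by decide, by decide, by decide⟩
      | exact ⟨3, 1, by decide, by decide, by decide, by decide, by decide⟩

-- ===== main =====

theorem stmt11 (w : List Letter) (h : Even w.length) (hPhi : Phi w = 0)
    (hO : 2 ≤ countO w) (hU : 2 ≤ countU w) :
    ∃ w', Relation.ReflTransGen Reduces w w' ∧ w'.length = 4 ∧
      (∃ i j, i < w.length ∧ j < w.length ∧ PairDisjoint w.length i j ∧
        OUat w i ∧ UOat w j) ∧
      (∃ i j, i < 4 ∧ j < 4 ∧ PairDisjoint 4 i j ∧ OUat w' i ∧ UOat w' j) := by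
  have ht := twoPhi_of_Phi w h hPhi
  obtain ⟨w', hred, hlen4, hO2, hU2, ht'⟩ := reduce_to_four w.length w rfl h ht hO hU
  exact ⟨w', hred, hlen4, exists_disjoint w h ht hO hU, final_four w' hlen4 hO2 hU2 ht'⟩
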